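/- arXiv:2507.06896 — 3 statements merged into one kernel-verified Lean document; each statement's English description precedes it below -/
import Mathlib

section
/- In the NUCA with θ(x) = τ (traffic) for x > 0 and identity for x ≤ 0 on Σ = {0,1}: no configuration c with c(0) = 0 is an equicontinuity point; specifically, for every finite D ∋ 1 there exist e₀, e₁ agreeing with c on D (e₀ all-zero outside D, e₁ all-one outside D) and a time t with H_θ^t(e₀)(1) ≠ H_θ^t(e₁)(1). -/
open Function

/-- `f` is a local rule of radius (at most) `r`: it only depends on coordinates in `[-r, r]`. -/
def IsLocalRule {A : Type*} (r : ℕ) (f : (ℤ → A) → A) : Prop :=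
  ∀ u v : ℤ → A, (∀ i : ℤ, -(r : ℤ) ≤ i → i ≤ (r : ℤ) → u i = v i) → f u = f v

/-- The global map of the non-uniform cellular automaton with rule distribution `θ`. -/
def nuca {A : Type*} (θ : ℤ → ((ℤ → A) → A)) (c : ℤ → A) : ℤ → A :=
  fun x => θ x (fun i => c (x + i))

/-- A configuration `θ : ℤ → R` is (spatially) recurrent: every finite pattern
occurs in some other (translated) position. -/
def Recurrent {R : Type*} (θ : ℤ → R) : Prop :=
  ∀ (a : ℤ) (m : ℕ), ∃ k : ℤ, k ≠ 0 ∧ ∀ i : ℕ, i < m → θ (a + k + i) = θ (a + i)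

/-- A configuration `θ : ℤ → R` is (spatially) uniformly recurrent: every finite pattern
occurs with bounded gaps. -/
def UnifRecurrent {R : Type*} (θ : ℤ → R) : Prop :=
  ∀ (a : ℤ) (m : ℕ), ∃ n : ℕ, ∀ x : ℤ, ∃ k : ℤ, x ≤ k ∧ k ≤ x + (n : ℤ) ∧
    ∀ i : ℕ, i < m → θ (k + i) = θ (a + i)

/-- `φ` lies in the orbit closure of `θ` under the shift (combinatorial characterization:
every finite pattern of `φ` occurs in `θ`). -/
def InOrbitClosure {R : Type*} (φ θ : ℤ → R) : Prop :=
  ∀ (a : ℤ) (m : ℕ), ∃ k : ℤ, ∀ i : ℕ, i < m → φ (a + i) = θ (a + k + i)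

/-- The radius-`r` neighbourhood of a finite domain `D`. -/
noncomputable def nbhd (r : ℕ) (D : Finset ℤ) : Finset ℤ :=
  D.biUnion (fun x => Finset.Icc (x - (r : ℤ)) (x + (r : ℤ)))

/-- A NUCA (with radius-`r` rules) is balanced: every pattern on a finite domain `D` has
exactly `|Σ|^(|N(D)|-|D|)` preimage patterns on the neighbourhood `N(D)`. -/
def NucaBalanced {A : Type*} [Fintype A] (r : ℕ) (θ : ℤ → ((ℤ → A) → A)) : Prop :=
  ∀ (D : Finset ℤ) (p : ℤ → A),
    Nat.card {q : { y : ℤ // y ∈ nbhd r D } → A //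
      ∀ c : ℤ → A, (∀ i : { y : ℤ // y ∈ nbhd r D }, c i.1 = q i) →
        ∀ x ∈ D, nuca θ c x = p x} =
      Fintype.card A ^ ((nbhd r D).card - D.card)

/-- `c` is an equicontinuity point of the NUCA `θ`. -/
def EqPt {A : Type*} (θ : ℤ → ((ℤ → A) → A)) (c : ℤ → A) : Prop :=
  ∀ E : Finset ℤ, ∃ D : Finset ℤ, ∀ e : ℤ → A, (∀ x ∈ D, e x = c x) →
    ∀ n : ℕ, 1 ≤ n → ∀ x ∈ E, (nuca θ)^[n] e x = (nuca θ)^[n] c x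

/-- The NUCA `θ` is sensitive to initial conditions. -/
def Sensitive {A : Type*} (θ : ℤ → ((ℤ → A) → A)) : Prop :=
  ∃ E : Finset ℤ, ∀ c : ℤ → A, ∀ D : Finset ℤ, ∃ e : ℤ → A,
    (∀ x ∈ D, e x = c x) ∧ ∃ n : ℕ, 1 ≤ n ∧ ∃ x ∈ E, (nuca θ)^[n] e x ≠ (nuca θ)^[n] c x


/-- The leftward traffic rule τ (with 1 = true, 0 = false). -/
def tau : (ℤ → Bool) → Bool := fun u =>
  if u (-1) = false ∧ u 0 = true then false
  else if u 0 = false ∧ u 1 = true then true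
  else u 0

/-- The identity rule. -/
def idRule : (ℤ → Bool) → Bool := fun u => u 0

/-- Traffic on the positive cells, identity on the nonpositive cells. -/
def θtraffic : ℤ → ((ℤ → Bool) → Bool) := fun x => if 0 < x then tau else idRule

lemma step_pos (e : ℤ → Bool) (x : ℤ) (hx : 0 < x) :
    nuca θtraffic e x =
      if e (x - 1) = false ∧ e x = true then false
      else if e x = false ∧ e (x + 1) = true then true else e x := by
  simp only [nuca, θtraffic, if_pos hx, tau, add_zero, ← sub_eq_add_neg]

lemma step_nonpos (e : ℤ → Bool) (x : ℤ) (hx : x ≤ 0) :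
    nuca θtraffic e x = e x := by
  simp only [nuca, θtraffic, if_neg (not_lt.mpr hx), idRule, add_zero]

lemma iter_nonpos (e : ℤ → Bool) (x : ℤ) (hx : x ≤ 0) (t : ℕ) :
    (nuca θtraffic)^[t] e x = e x := by
  induction t with
  | zero => rfl
  | succ t ih => rw [iterate_succ_apply', step_nonpos _ _ hx, ih]

lemma iter_zero_right (e : ℤ → Bool) (M : ℤ) (hM : 1 ≤ M)
    (h : ∀ x, M ≤ x → e x = false) (t : ℕ) :
    ∀ x, M ≤ x → (nuca θtraffic)^[t] e x = false := by
  induction t with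
  | zero => exact h
  | succ t ih =>
    intro x hx
    rw [iterate_succ_apply', step_pos _ _ (by omega)]
    have h1 := ih x hx
    have h2 := ih (x + 1) (by omega)
    simp [h1, h2]

lemma iter_one_right (e : ℤ → Bool) (M : ℤ) (hM : 1 ≤ M)
    (h : ∀ x, M ≤ x → e x = true) :
    ∀ t : ℕ, ∀ x, M + t ≤ x → (nuca θtraffic)^[t] e x = true := by
  intro t
  induction t with
  | zero => simpa using h
  | succ t ih =>
    intro x hx
    push_cast at hx
    rw [iterate_succ_apply', step_pos _ _ (by omega)]
    have h1 := ih (x - 1) (by omega)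
    have h2 := ih x (by omega)
    simp [h1, h2]

lemma traffic_dec (u : ℤ → Bool) (M : ℤ) (h0 : u 0 = false) (hM : u M = false)
    (hM2 : 2 ≤ M) :
    ((Finset.Icc 1 (M-1)).filter (fun x => nuca θtraffic u x = true)).card
      + (if u 1 = true then 1 else 0)
      ≤ ((Finset.Icc 1 (M-1)).filter (fun x => u x = true)).card := by
  set S := (Finset.Icc 1 (M-1)).filter (fun x => u x = true) with hS
  set T := (Finset.Icc 1 (M-1)).filter (fun x => nuca θtraffic u x = true) with hT
  set f : ℤ → ℤ := fun x => if u x = true then x else x + 1 with hf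
  have hmemT : ∀ x, x ∈ T → 1 ≤ x ∧ x ≤ M - 1 ∧ nuca θtraffic u x = true := by
    intro x hx
    simp only [hT, Finset.mem_filter, Finset.mem_Icc] at hx
    exact ⟨hx.1.1, hx.1.2, hx.2⟩
  have hmaps : ∀ x ∈ T, f x ∈ S := by
    intro x hx
    obtain ⟨hx1, hx2, hvx⟩ := hmemT x hx
    by_cases hux : u x = true
    · simp only [hf, if_pos hux, hS, Finset.mem_filter, Finset.mem_Icc]
      exact ⟨⟨hx1, hx2⟩, hux⟩
    · simp only [Bool.not_eq_true] at hux
      rw [step_pos u x (by omega), hux] at hvx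
      simp only [Bool.false_eq_true, and_false, if_false, true_and, and_true] at hvx
      have hright : u (x + 1) = true := by
        by_cases h : u (x + 1) = true
        · exact h
        · rw [if_neg h] at hvx; exact absurd hvx (by simp)
      have hne : x + 1 ≠ M := by
        intro h; rw [h, hM] at hright; exact absurd hright (by simp)
      simp only [hf, hux, hS, Finset.mem_filter, Finset.mem_Icc]
      refine ⟨⟨by omega, by omega⟩, hright⟩
  have hinj : Set.InjOn f T := by
    intro x hx y hy hxy
    obtain ⟨hx1, hx2, hvx⟩ := hmemT x hx
    obtain ⟨hy1, hy2, hvy⟩ := hmemT y hy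
    by_cases hux : u x = true <;> by_cases huy : u y = true
    · simpa [hf, hux, huy] using hxy
    · -- f x = x, f y = y + 1, so x = y + 1
      simp only [hf, if_pos hux, if_neg huy] at hxy
      exfalso
      simp only [Bool.not_eq_true] at huy
      rw [step_pos u x (by omega)] at hvx
      rw [if_pos ⟨by rw [hxy]; simpa using huy, hux⟩] at hvx
      exact absurd hvx (by simp)
    · simp only [hf, if_neg hux, if_pos huy] at hxy
      exfalso
      simp only [Bool.not_eq_true] at hux
      rw [step_pos u y (by omega)] at hvy
      rw [if_pos ⟨by rw [← hxy]; simpa using hux, huy⟩] at hvy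
      exact absurd hvy (by simp)
    · simp only [hf, if_neg hux, if_neg huy] at hxy; omega
  by_cases hu1 : u 1 = true
  · rw [if_pos hu1]
    have h1S : (1 : ℤ) ∈ S := by
      simp only [hS, Finset.mem_filter, Finset.mem_Icc]
      exact ⟨⟨le_refl _, by omega⟩, hu1⟩
    have hv1 : nuca θtraffic u 1 = false := by
      rw [step_pos u 1 one_pos]
      norm_num [h0, hu1]
    have hmaps' : ∀ x ∈ T, f x ∈ S.erase 1 := by
      intro x hx
      refine Finset.mem_erase.mpr ⟨?_, hmaps x hx⟩
      obtain ⟨hx1, hx2, hvx⟩ := hmemT x hx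
      by_cases hux : u x = true
      · simp only [hf, if_pos hux]
        intro h; rw [h] at hvx; rw [hv1] at hvx; exact absurd hvx (by simp)
      · simp only [hf, if_neg hux]; omega
    have hcard := Finset.card_le_card_of_injOn f hmaps' hinj
    rw [Finset.card_erase_of_mem h1S] at hcard
    have : 1 ≤ S.card := Finset.card_pos.mpr ⟨1, h1S⟩
    omega
  · rw [if_neg hu1]
    simpa using Finset.card_le_card_of_injOn f hmaps hinj

lemma e1_hits (e : ℤ → Bool) (M : ℤ) (hM : 2 ≤ M)
    (h : ∀ x, M ≤ x → e x = true) :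
    ∀ t : ℕ, ∃ s, t ≤ s ∧ (nuca θtraffic)^[s] e 1 = true := by
  have hex : ∀ t : ℕ, ∃ n : ℕ, (nuca θtraffic)^[t] e (1 + n) = true := by
    intro t
    refine ⟨(M - 1).toNat + t, iter_one_right e M (by omega) h t _ ?_⟩
    have : ((M - 1).toNat : ℤ) = M - 1 := Int.toNat_of_nonneg (by omega)
    push_cast
    omega
  have key : ∀ k : ℕ, ∀ t : ℕ, (nuca θtraffic)^[t] e (1 + k) = true →
      ∃ s, t ≤ s ∧ (nuca θtraffic)^[s] e 1 = true := by
    intro k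
    induction k using Nat.strong_induction_on with
    | _ k IH =>
      intro t hk
      have hexk : ∃ n : ℕ, (nuca θtraffic)^[t] e (1 + (n : ℤ)) = true := ⟨k, hk⟩
      set n := Nat.find hexk with hn
      have hnspec : (nuca θtraffic)^[t] e (1 + (n : ℤ)) = true := Nat.find_spec hexk
      have hnle : n ≤ k := Nat.find_min' _ hk
      rcases Nat.eq_zero_or_pos n with h0 | hpos
      · refine ⟨t, le_refl t, ?_⟩
        rw [h0] at hnspec
        simpa using hnspec
      · have hmin : (nuca θtraffic)^[t] e (1 + ((n - 1 : ℕ) : ℤ)) = false := by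
          have := Nat.find_min hexk (show n - 1 < n by omega)
          simpa using this
        have hcast : ((n - 1 : ℕ) : ℤ) = (n : ℤ) - 1 := by omega
        have hstep : (nuca θtraffic)^[t+1] e (1 + ((n - 1 : ℕ) : ℤ)) = true := by
          rw [iterate_succ_apply', step_pos _ _ (by omega)]
          have harith : 1 + ((n - 1 : ℕ) : ℤ) + 1 = 1 + (n : ℤ) := by omega
          rw [hmin, harith, hnspec]
          simp
        obtain ⟨s, hs1, hs2⟩ := IH (n - 1) (by omega) (t + 1) hstep
        exact ⟨s, by omega, hs2⟩
  intro t
  obtain ⟨k, hk⟩ := hex t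
  exact key k t hk

/-- No configuration with a 0 at the origin is an equicontinuity point of the
traffic/identity NUCA: for every finite domain D containing cell 1, the extensions of
c|D by all-0 and by all-1 outside D eventually disagree at cell 1. -/
theorem stmt_11 (c : ℤ → Bool) (hc : c 0 = false) :
    ¬ EqPt θtraffic c ∧
    ∀ D : Finset ℤ, (1 : ℤ) ∈ D →
      ∃ e₀ e₁ : ℤ → Bool,
        (∀ x ∈ D, e₀ x = c x) ∧ (∀ x ∈ D, e₁ x = c x) ∧
        (∀ x ∉ D, e₀ x = false) ∧ (∀ x ∉ D, e₁ x = true) ∧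
        ∃ t : ℕ, (nuca θtraffic)^[t] e₀ 1 ≠ (nuca θtraffic)^[t] e₁ 1 := by
  have main : ∀ D : Finset ℤ, (1 : ℤ) ∈ D →
      ∃ e₀ e₁ : ℤ → Bool,
        (∀ x ∈ D, e₀ x = c x) ∧ (∀ x ∈ D, e₁ x = c x) ∧
        (∀ x ∉ D, e₀ x = false) ∧ (∀ x ∉ D, e₁ x = true) ∧
        ∃ t : ℕ, (nuca θtraffic)^[t] e₀ 1 ≠ (nuca θtraffic)^[t] e₁ 1 := by
    intro D hD
    set e₀ : ℤ → Bool := fun x => if x ∈ D then c x else false with he₀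
    set e₁ : ℤ → Bool := fun x => if x ∈ D then c x else true with he₁
    set M : ℤ := D.sup' ⟨1, hD⟩ id + 1 with hMdef
    have hDM : ∀ x ∈ D, x < M := fun x hx =>
      lt_of_le_of_lt (Finset.le_sup' id hx) (lt_add_one _)
    have hM2 : 2 ≤ M := by
      have : (1 : ℤ) ≤ D.sup' ⟨1, hD⟩ id := Finset.le_sup' id hD
      omega
    refine ⟨e₀, e₁, fun x hx => by simp [he₀, hx], fun x hx => by simp [he₁, hx],
      fun x hx => by simp [he₀, hx], fun x hx => by simp [he₁, hx], ?_⟩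
    have he00 : e₀ 0 = false := by
      by_cases h : (0 : ℤ) ∈ D <;> simp [he₀, h, hc]
    have he0R : ∀ x, M ≤ x → e₀ x = false := by
      intro x hx
      have hxD : x ∉ D := fun h => absurd (hDM x h) (not_lt.mpr hx)
      simp [he₀, hxD]
    have he1R : ∀ x, M ≤ x → e₁ x = true := by
      intro x hx
      have hxD : x ∉ D := fun h => absurd (hDM x h) (not_lt.mpr hx)
      simp [he₁, hxD]
    have hu0 : ∀ t : ℕ, (nuca θtraffic)^[t] e₀ 0 = false := fun t =>
      (iter_nonpos e₀ 0 le_rfl t).trans he00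
    have huM : ∀ t : ℕ, (nuca θtraffic)^[t] e₀ M = false := fun t =>
      iter_zero_right e₀ M (by omega) he0R t M le_rfl
    set N : ℕ → ℕ := fun t =>
      ((Finset.Icc 1 (M-1)).filter (fun x => (nuca θtraffic)^[t] e₀ x = true)).card with hN
    have hdec : ∀ t : ℕ, N (t+1) +
        (if (nuca θtraffic)^[t] e₀ 1 = true then 1 else 0) ≤ N t := by
      intro t
      have := traffic_dec ((nuca θtraffic)^[t] e₀) M (hu0 t) (huM t) hM2
      simp only [hN]
      rw [iterate_succ_apply']
      exact this
    have hcount : ∀ t : ℕ,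
        N t + ((Finset.range t).filter
          (fun s => (nuca θtraffic)^[s] e₀ 1 = true)).card ≤ N 0 := by
      intro t
      induction t with
      | zero => simp
      | succ t ih =>
        rw [Finset.range_add_one, Finset.filter_insert]
        by_cases hP : (nuca θtraffic)^[t] e₀ 1 = true
        · rw [if_pos hP, Finset.card_insert_of_notMem (by simp)]
          have := hdec t
          rw [if_pos hP] at this
          omega
        · rw [if_neg hP]
          have := hdec t
          rw [if_neg hP] at this
          omega
    have hfin : {s : ℕ | (nuca θtraffic)^[s] e₀ 1 = true}.Finite := by
      by_contra hinf
      have hinf' : {s : ℕ | (nuca θtraffic)^[s] e₀ 1 = true}.Infinite := hinf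
      obtain ⟨T, hTsub, hTcard⟩ := hinf'.exists_subset_card_eq (N 0 + 1)
      obtain ⟨n, hn⟩ := T.exists_nat_subset_range
      have hsub : T ⊆ (Finset.range n).filter
          (fun s => (nuca θtraffic)^[s] e₀ 1 = true) :=
        fun s hs => Finset.mem_filter.mpr ⟨hn hs, hTsub hs⟩
      have h1 := Finset.card_le_card hsub
      have h2 := hcount n
      omega
    obtain ⟨T, hT⟩ := hfin.bddAbove
    obtain ⟨s, hsge, hs1⟩ := e1_hits e₁ M hM2 he1R (T + 1)
    refine ⟨s, ?_⟩
    have h0s : (nuca θtraffic)^[s] e₀ 1 = false := by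
      by_contra h
      simp only [Bool.not_eq_false] at h
      have := hT (Set.mem_setOf.mpr h)
      omega
    rw [h0s, hs1]
    simp
  refine ⟨?_, main⟩
  intro hEq
  obtain ⟨D, hD⟩ := hEq {1}
  obtain ⟨e₀, e₁, h₀, h₁, -, -, t, hne⟩ := main (insert 1 D) (Finset.mem_insert_self 1 D)
  have h₀' : ∀ x ∈ D, e₀ x = c x := fun x hx => h₀ x (Finset.mem_insert_of_mem hx)
  have h₁' : ∀ x ∈ D, e₁ x = c x := fun x hx => h₁ x (Finset.mem_insert_of_mem hx)
  rcases Nat.eq_zero_or_pos t with h0 | hpos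
  · rw [h0] at hne
    simp only [iterate_zero, id_eq] at hne
    rw [h₀ 1 (Finset.mem_insert_self 1 D), h₁ 1 (Finset.mem_insert_self 1 D)] at hne
    exact hne rfl
  · have a₀ := hD e₀ h₀' t hpos 1 (Finset.mem_singleton_self 1)
    have a₁ := hD e₁ h₁' t hpos 1 (Finset.mem_singleton_self 1)
    rw [a₀, a₁] at hne
    exact hne rfl
end

section
/- There exists a finite alphabet Σ and a rule distribution θ over a two-element rule set such that the NUCA H_θ is not sensitive and has no equicontinuity points. -/
open Function

namespace Nuca12

/-- The local rule table. -/
def g : Fin 4 → Fin 4 → Fin 4 → Fin 4 := fun a b c =>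
  if b = 0 ∧ c = 3 then 3
  else if a = 1 ∧ b = 1 ∧ c = 1 then 1
  else if a = 1 ∧ b = 1 ∧ c = 2 then 1
  else if b = 1 ∧ c = 3 then 3
  else if a = 1 ∧ b = 2 then 2
  else if b = 3 ∧ c = 3 then 3
  else 0

lemma g1 : ∀ a b c : Fin 4, g a b c = 1 → a = 1 ∧ b = 1 := by decide
lemma g2 : ∀ a b c : Fin 4, g a b c = 2 → a = 1 ∧ b = 2 := by decide
lemma g3 : ∀ a b c : Fin 4, g a b c = 3 → c = 3 := by decide
lemma g111 : g 1 1 1 = 1 := by decide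
lemma g112 : g 1 1 2 = 1 := by decide
lemma g12 : ∀ c, g 1 2 c = 2 := by decide
lemma g33 : ∀ a, g a 3 3 = 3 := by decide
lemma gne23 : ∀ a b, b ≠ 2 → g a b 3 = 3 := by decide

/-- identity rule -/
def rId : (ℤ → Fin 4) → Fin 4 := fun u => u 0
/-- the `g` rule -/
def rG : (ℤ → Fin 4) → Fin 4 := fun u => g (u (-1)) (u 0) (u 1)

def θ : ℤ → ((ℤ → Fin 4) → Fin 4) := fun x => if x ≤ 0 then rId else rG

abbrev H : (ℤ → Fin 4) → (ℤ → Fin 4) := nuca θ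

lemma H_le (c : ℤ → Fin 4) {x : ℤ} (hx : x ≤ 0) : H c x = c x := by
  simp [H, nuca, θ, rId, hx]

lemma H_pos (c : ℤ → Fin 4) {x : ℤ} (hx : 1 ≤ x) :
    H c x = g (c (x - 1)) (c x) (c (x + 1)) := by
  have : ¬ x ≤ 0 := by omega
  simp only [H, nuca, θ, if_neg this, rG]
  rw [show x + (-1) = x - 1 by ring, add_zero]

lemma it_le (c : ℤ → Fin 4) {x : ℤ} (hx : x ≤ 0) : ∀ n, H^[n] c x = c x := by
  intro n
  induction n with
  | zero => rfl
  | succ n ih => rw [Function.iterate_succ_apply', H_le _ hx, ih]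

lemma it_pos (c : ℤ → Fin 4) {x : ℤ} (hx : 1 ≤ x) (n : ℕ) :
    H^[n + 1] c x = g (H^[n] c (x - 1)) (H^[n] c x) (H^[n] c (x + 1)) := by
  rw [Function.iterate_succ_apply', H_pos _ hx]

/-- no creation of 1s -/
lemma ones (e : ℤ → Fin 4) : ∀ (n : ℕ) (x : ℤ), H^[n] e x = 1 →
    ∀ y : ℤ, x - n ≤ y → 0 ≤ y → y ≤ x → e y = 1 := by
  intro n
  induction n with
  | zero =>
    intro x h y h1 h2 h3
    have hyx : y = x := by omega
    rw [hyx]; simpa using h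
  | succ n ih =>
    intro x h y h1 h2 h3
    by_cases hx : x ≤ 0
    · rw [Function.iterate_succ_apply', H_le _ hx] at h
      exact ih x h y (by omega) h2 h3
    · rw [it_pos e (by omega)] at h
      obtain ⟨ha, hb⟩ := g1 _ _ _ h
      rcases lt_or_ge y x with hy | hy
      · exact ih (x - 1) ha y (by omega) h2 (by omega)
      · exact ih x hb y (by omega) h2 h3

/-- no creation of 2s -/
lemma twos (e : ℤ → Fin 4) : ∀ (n : ℕ) (x : ℤ), H^[n] e x = 2 →
    e x = 2 ∧ ∀ y : ℤ, x - n ≤ y → 0 ≤ y → y ≤ x - 1 → e y = 1 := by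
  intro n
  induction n with
  | zero => intro x h; exact ⟨h, fun y h1 h2 h3 => by omega⟩
  | succ n ih =>
    intro x h
    by_cases hx : x ≤ 0
    · rw [Function.iterate_succ_apply', H_le _ hx] at h
      exact ⟨(ih x h).1, fun y h1 h2 h3 => by omega⟩
    · rw [it_pos e (by omega)] at h
      obtain ⟨ha, hb⟩ := g2 _ _ _ h
      refine ⟨(ih x hb).1, fun y h1 h2 h3 => ?_⟩
      exact ones e n (x - 1) ha y (by omega) h2 (by omega)

/-- no creation of 3s (in the positive region) -/
lemma threes (e : ℤ → Fin 4) : ∀ (n : ℕ) (x : ℤ), 1 ≤ x → H^[n] e x = 3 →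
    e (x + n) = 3 := by
  intro n
  induction n with
  | zero => intro x _ h; simpa using h
  | succ n ih =>
    intro x hx h
    rw [it_pos e hx] at h
    have h3 := g3 _ _ _ h
    have h4 := ih (x + 1) (by omega) h3
    convert h4 using 2
    push_cast
    ring

/-- a tail of 3s is invariant -/
lemma wall (e : ℤ → Fin 4) {R : ℤ} (hR : 1 ≤ R) (he : ∀ y, R ≤ y → e y = 3) :
    ∀ n, ∀ y, R ≤ y → H^[n] e y = 3 := by
  intro n
  induction n with
  | zero => exact he
  | succ n ih =>
    intro y hy
    rw [it_pos e (by omega), ih y hy, ih (y + 1) (by omega)]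
    exact g33 _

/-- the 3-wall advances to any unshielded cell -/
lemma advance (e : ℤ → Fin 4) {p R : ℤ} (hp : 1 ≤ p) (hR : 1 ≤ R)
    (he : ∀ y, R ≤ y → e y = 3)
    (hns : ∀ x, p ≤ x → e x = 2 → (∀ y, 0 ≤ y → y ≤ x - 1 → e y = 1) → False) :
    ∃ N : ℕ, ∀ n, N ≤ n → H^[n] e p = 3 := by
  suffices h : ∀ (k : ℕ) (x : ℤ), p ≤ x → R - k ≤ x →
      ∃ N : ℕ, ∀ n, N ≤ n → H^[n] e x = 3 by
    exact h (R - p).toNat p le_rfl (by omega)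
  intro k
  induction k with
  | zero =>
    intro x hx hRx
    exact ⟨0, fun n _ => wall e hR he n x (by omega)⟩
  | succ k ih =>
    intro x hx hRx
    rcases le_or_gt (R - k) x with hcase | hcase
    · exact ih x hx hcase
    obtain ⟨N, hN⟩ := ih (x + 1) (by omega) (by omega)
    have hx1 : 1 ≤ x := by omega
    set n₀ : ℕ := N + x.toNat with hn₀
    have hne2 : H^[n₀] e x ≠ 2 := by
      intro h2
      obtain ⟨hex, hones⟩ := twos e n₀ x h2
      exact hns x hx hex (fun y hy1 hy2 => hones y (by omega) hy1 hy2)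
    have hstart : H^[n₀ + 1] e x = 3 := by
      rw [it_pos e hx1, hN n₀ (by omega)]
      exact gne23 _ _ hne2
    refine ⟨n₀ + 1, fun n hn => ?_⟩
    induction n, hn using Nat.le_induction with
    | base => exact hstart
    | succ m hm ihm =>
      rw [it_pos e hx1, ihm, hN m (by omega)]
      exact g33 _

/-- invariance of the blocking pattern 1…12 on [0, j] -/
lemma block (e : ℤ → Fin 4) {j : ℤ} (hj : 1 ≤ j)
    (h1 : ∀ x, 0 ≤ x → x ≤ j - 1 → e x = 1) (h2 : e j = 2) :
    ∀ n, (∀ x, 0 ≤ x → x ≤ j - 1 → H^[n] e x = 1) ∧ H^[n] e j = 2 := by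
  intro n
  induction n with
  | zero => exact ⟨h1, h2⟩
  | succ n ih =>
    obtain ⟨ih1, ih2⟩ := ih
    constructor
    · intro x hx0 hxj
      rcases eq_or_lt_of_le hx0 with hx | hx
      · rw [Function.iterate_succ_apply', H_le _ (by omega)]
        exact ih1 x hx0 hxj
      · rw [it_pos e (by omega), ih1 (x - 1) (by omega) (by omega),
          ih1 x hx0 hxj]
        rcases lt_or_ge (x + 1) j with hy | hy
        · rw [ih1 (x + 1) (by omega) (by omega)]; exact g111
        · have : x + 1 = j := by omega
          rw [this, ih2]; exact g112
    · rw [it_pos e hj, ih1 (j - 1) (by omega) (by omega), ih2]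
      exact g12 _

end Nuca12

/-- There is a finite alphabet and a rule distribution over a two-element rule set whose
NUCA is not sensitive and has no equicontinuity points. -/
theorem stmt_12 :
    ∃ (A : Type) (_ : Fintype A) (r : ℕ) (θ : ℤ → ((ℤ → A) → A)),
      (∀ x, IsLocalRule r (θ x)) ∧ (Set.range θ).Finite ∧
      (Set.range θ).ncard ≤ 2 ∧
      ¬ Sensitive θ ∧ (∀ c : ℤ → A, ¬ EqPt θ c) := by
  classical
  refine ⟨Fin 4, inferInstance, 1, Nuca12.θ, ?_, ?_, ?_, ?_, ?_⟩
  · -- local rules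
    intro x u v h
    by_cases hx : x ≤ 0
    · simpa [Nuca12.θ, hx, Nuca12.rId] using h 0 (by norm_num) (by norm_num)
    · simp only [Nuca12.θ, if_neg hx, Nuca12.rG]
      rw [h (-1) (by norm_num) (by norm_num), h 0 (by norm_num) (by norm_num),
        h 1 (by norm_num) (by norm_num)]
  · -- finite range
    exact ((Set.finite_singleton Nuca12.rG).insert Nuca12.rId).subset
      (by rintro _ ⟨x, rfl⟩
          by_cases hx : x ≤ 0 <;> simp [Nuca12.θ, hx])
  · -- ncard ≤ 2
    have hsub : Set.range Nuca12.θ ⊆ {Nuca12.rId, Nuca12.rG} := by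
      rintro _ ⟨x, rfl⟩
      by_cases hx : x ≤ 0 <;> simp [Nuca12.θ, hx]
    calc (Set.range Nuca12.θ).ncard ≤ ({Nuca12.rId, Nuca12.rG} : Set _).ncard :=
          Set.ncard_le_ncard hsub ((Set.finite_singleton _).insert _)
      _ ≤ ({Nuca12.rG} : Set _).ncard + 1 := Set.ncard_insert_le _ _
      _ ≤ 2 := by rw [Set.ncard_singleton]
  · -- not sensitive
    rintro ⟨E, hE⟩
    set j : ℤ := (insert (1 : ℤ) E).max' (Finset.insert_nonempty _ _) with hjdef
    have hj1 : 1 ≤ j := Finset.le_max' _ 1 (Finset.mem_insert_self _ _)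
    have hjE : ∀ x ∈ E, x ≤ j := fun x hx =>
      Finset.le_max' _ x (Finset.mem_insert_of_mem hx)
    set c : ℤ → Fin 4 := fun x => if x = j then 2 else 1 with hcdef
    obtain ⟨e, heD, n, hn1, x, hxE, hne⟩ := hE c (E ∪ Finset.Icc 0 j)
    have hc1 : ∀ y : ℤ, 0 ≤ y → y ≤ j - 1 → c y = 1 := by
      intro y hy1 hy2; simp only [hcdef]; rw [if_neg (by omega)]
    have hc2 : c j = 2 := by simp [hcdef]
    have heeq : ∀ y : ℤ, 0 ≤ y → y ≤ j → e y = c y := by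
      intro y hy1 hy2
      exact heD y (Finset.mem_union_right _ (Finset.mem_Icc.mpr ⟨hy1, hy2⟩))
    have he1 : ∀ y : ℤ, 0 ≤ y → y ≤ j - 1 → e y = 1 := by
      intro y hy1 hy2; rw [heeq y hy1 (by omega)]; exact hc1 y hy1 hy2
    have he2 : e j = 2 := by rw [heeq j (by omega) le_rfl]; exact hc2
    have hbe := Nuca12.block e hj1 he1 he2 n
    have hbc := Nuca12.block c hj1 hc1 hc2 n
    apply hne
    by_cases hx0 : x ≤ 0
    · rw [Nuca12.it_le e hx0, Nuca12.it_le c hx0]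
      exact heD x (Finset.mem_union_left _ hxE)
    · have hx1 : 1 ≤ x := by omega
      have hxj : x ≤ j := hjE x hxE
      rcases lt_or_ge x j with hlt | hge
      · rw [hbe.1 x (by omega) (by omega), hbc.1 x (by omega) (by omega)]
      · have : x = j := by omega
        rw [this, hbe.2, hbc.2]
  · -- no equicontinuity points
    intro c hE
    -- choose the observation cell p (depending only on c)
    obtain ⟨p, hp1, hpns⟩ : ∃ p : ℤ, 1 ≤ p ∧ ∀ x, p ≤ x → c x = 2 →
        (∀ y, 0 ≤ y → y ≤ x - 1 → c y = 1) → False := by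
      by_cases hS : ∃ q : ℤ, 1 ≤ q ∧ (∀ y, 0 ≤ y → y ≤ q - 1 → c y = 1) ∧ c q = 2
      · obtain ⟨q, hq1, hqs, hq2⟩ := hS
        refine ⟨q + 1, by omega, fun x hx h2 h1 => ?_⟩
        have h := h1 q (by omega) (by omega)
        rw [h] at hq2
        exact absurd hq2 (by decide)
      · exact ⟨1, le_rfl, fun x hx h2 h1 => hS ⟨x, hx, h1, h2⟩⟩
    obtain ⟨D, hD⟩ := hE {p}
    set R : ℤ := (insert (1 : ℤ) D).max' (Finset.insert_nonempty _ _) + 1 with hRdef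
    have hR1 : 1 ≤ R := by
      have := Finset.le_max' (insert (1 : ℤ) D) 1 (Finset.mem_insert_self _ _)
      omega
    have hDR : ∀ d ∈ D, d < R := by
      intro d hd
      have := Finset.le_max' (insert (1 : ℤ) D) d (Finset.mem_insert_of_mem hd)
      omega
    set e0 : ℤ → Fin 4 := fun x => if x ∈ D then c x else 0 with he0def
    set e3 : ℤ → Fin 4 := fun x => if x ∈ D then c x else if R ≤ x then 3 else 0
      with he3def
    have he3tail : ∀ y : ℤ, R ≤ y → e3 y = 3 := by
      intro y hy
      have : y ∉ D := fun h => absurd (hDR y h) (by omega)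
      simp only [he3def]; rw [if_neg this, if_pos hy]
    have hns3 : ∀ x, p ≤ x → e3 x = 2 →
        (∀ y, 0 ≤ y → y ≤ x - 1 → e3 y = 1) → False := by
      intro x hx h2 h1
      have hcx : c x = 2 := by
        by_cases hxD : x ∈ D
        · simpa only [he3def, if_pos hxD] using h2
        · simp only [he3def, if_neg hxD] at h2
          by_cases hRx : R ≤ x
          · rw [if_pos hRx] at h2; exact absurd h2 (by decide)
          · rw [if_neg hRx] at h2; exact absurd h2 (by decide)
      refine hpns x hx hcx (fun y hy1 hy2 => ?_)
      have h1y := h1 y hy1 hy2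
      by_cases hyD : y ∈ D
      · simpa only [he3def, if_pos hyD] using h1y
      · simp only [he3def, if_neg hyD] at h1y
        by_cases hRy : R ≤ y
        · rw [if_pos hRy] at h1y; exact absurd h1y (by decide)
        · rw [if_neg hRy] at h1y; exact absurd h1y (by decide)
    obtain ⟨N, hN⟩ := Nuca12.advance e3 hp1 hR1 he3tail hns3
    set n : ℕ := N + R.toNat + 1 with hndef
    have hagree0 : ∀ x ∈ D, e0 x = c x := fun x hx => by
      simp only [he0def]; rw [if_pos hx]
    have hagree3 : ∀ x ∈ D, e3 x = c x := fun x hx => by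
      simp only [he3def]; rw [if_pos hx]
    have h0 := hD e0 hagree0 n (by omega) p (Finset.mem_singleton_self p)
    have h3 := hD e3 hagree3 n (by omega) p (Finset.mem_singleton_self p)
    have hval3 : (nuca Nuca12.θ)^[n] e3 p = 3 := hN n (by omega)
    have hval0 : (nuca Nuca12.θ)^[n] e0 p ≠ 3 := by
      intro h
      have := Nuca12.threes e0 n p hp1 h
      have hout : p + (n : ℤ) ∉ D := by
        intro hmem
        have := hDR _ hmem
        omega
      rw [he0def] at this
      simp only [if_neg hout] at this
      exact absurd this (by decide)
    rw [h0, ← h3] at hval0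
    exact hval0 hval3
end

section
/- Let Σ = ℤ/2, and consider the rule distribution θ = …f_R f_R g f_L f_L… (i.e., θ(x) = f_R for x < 0, θ(0) = g, θ(x) = f_L for x > 0), where f_L(a,b,c) = a⊕b, f_R(a,b,c) = b⊕c, g(a,b,c) = b. Then H_θ is bijective but not reversible: there is no NUCA with a finite rule set whose global map is H_θ^{-1}. -/
open Function

/-- The local rule f_L(a,b,c) = a ⊕ b. -/
def fL : (ℤ → ZMod 2) → ZMod 2 := fun u => u (-1) + u 0

/-- The local rule f_R(a,b,c) = b ⊕ c. -/
def fR : (ℤ → ZMod 2) → ZMod 2 := fun u => u 0 + u 1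

/-- The local rule g(a,b,c) = b. -/
def gId : (ℤ → ZMod 2) → ZMod 2 := fun u => u 0

/-- The distribution …f_R f_R g f_L f_L…. -/
def θ16 : ℤ → ((ℤ → ZMod 2) → ZMod 2) :=
  fun x => if x < 0 then fR else if x = 0 then gId else fL

/-- Explicit inverse of `nuca θ16`. -/
noncomputable def Kinv (d : ℤ → ZMod 2) : ℤ → ZMod 2 :=
  fun x => ∑ j ∈ Finset.Icc (min x 0) (max x 0), d j

lemma char2_1 (a b : ZMod 2) : a + (a + b) = b := by
  rw [← add_assoc, CharTwo.add_self_eq_zero, zero_add]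
lemma char2_2 (a b : ZMod 2) : a + b + b = a := by
  rw [add_assoc, CharTwo.add_self_eq_zero, add_zero]
lemma char2_3 (a b : ZMod 2) : a + (b + b) = a := by
  rw [CharTwo.add_self_eq_zero, add_zero]

lemma nuca16_neg (c : ℤ → ZMod 2) (x : ℤ) (h : x < 0) :
    nuca θ16 c x = c x + c (x + 1) := by
  simp only [nuca, θ16, if_pos h, fR, add_zero]

lemma nuca16_zero (c : ℤ → ZMod 2) : nuca θ16 c 0 = c 0 := by
  simp [nuca, θ16, gId]

lemma nuca16_pos (c : ℤ → ZMod 2) (x : ℤ) (h : 0 < x) :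
    nuca θ16 c x = c (x - 1) + c x := by
  simp only [nuca, θ16, if_neg (not_lt.mpr h.le), if_neg h.ne', fL, add_zero]
  rw [show x + -1 = x - 1 by ring]

lemma Kinv_zero (d : ℤ → ZMod 2) : Kinv d 0 = d 0 := by simp [Kinv]

lemma Kinv_succ (d : ℤ → ZMod 2) (x : ℤ) (h : 0 ≤ x) :
    Kinv d (x + 1) = Kinv d x + d (x + 1) := by
  have h1 : Finset.Icc (min (x+1) 0) (max (x+1) 0)
      = insert (x+1) (Finset.Icc (min x 0) (max x 0)) := by
    ext j; simp only [Finset.mem_Icc, Finset.mem_insert]; omega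
  rw [Kinv, Kinv, h1, Finset.sum_insert (by simp only [Finset.mem_Icc]; omega), add_comm]

lemma Kinv_pred (d : ℤ → ZMod 2) (x : ℤ) (h : x ≤ 0) :
    Kinv d (x - 1) = d (x - 1) + Kinv d x := by
  have h1 : Finset.Icc (min (x-1) 0) (max (x-1) 0)
      = insert (x-1) (Finset.Icc (min x 0) (max x 0)) := by
    ext j; simp only [Finset.mem_Icc, Finset.mem_insert]; omega
  rw [Kinv, Kinv, h1, Finset.sum_insert (by simp only [Finset.mem_Icc]; omega)]

lemma Kinv_left (c : ℤ → ZMod 2) : ∀ x, Kinv (nuca θ16 c) x = c x := by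
  intro x
  induction x using Int.induction_on with
  | zero => rw [Kinv_zero, nuca16_zero]
  | succ i ih =>
    rw [Kinv_succ _ _ (by positivity), ih, nuca16_pos _ _ (by positivity)]
    rw [show (i : ℤ) + 1 - 1 = i by ring, char2_1]
  | pred i ih =>
    rw [Kinv_pred _ _ (by omega : -(i:ℤ) ≤ 0), nuca16_neg _ _ (by omega),
      show -(i:ℤ) - 1 + 1 = -(i:ℤ) by ring, ih, char2_2]

lemma Kinv_right (d : ℤ → ZMod 2) : ∀ x, nuca θ16 (Kinv d) x = d x := by
  intro x
  rcases lt_trichotomy x 0 with h | h | h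
  · rw [nuca16_neg _ _ h]
    have := Kinv_pred d (x + 1) (by omega)
    rw [show x + 1 - 1 = x by ring] at this
    rw [this, add_assoc, char2_3]
  · subst h; rw [nuca16_zero, Kinv_zero]
  · rw [nuca16_pos _ _ h]
    have := Kinv_succ d (x - 1) (by omega)
    rw [show x - 1 + 1 = x by ring] at this
    rw [this, char2_1]

/-- The NUCA with distribution …f_R f_R g f_L f_L… is bijective but not reversible. -/
theorem stmt_16 :
    Function.Bijective (nuca θ16) ∧
    ¬ ∃ (s : ℕ) (φ : ℤ → ((ℤ → ZMod 2) → ZMod 2)), (Set.range φ).Finite ∧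
        (∀ x, IsLocalRule s (φ x)) ∧
        (∀ c, nuca φ (nuca θ16 c) = c) ∧ (∀ c, nuca θ16 (nuca φ c) = c) := by
  constructor
  · exact Function.bijective_iff_has_inverse.mpr
      ⟨Kinv, fun c => funext (Kinv_left c), fun d => funext (Kinv_right d)⟩
  · rintro ⟨s, φ, -, hloc, hL, -⟩
    set c1 : ℤ → ZMod 2 := fun _ => 1 with hc1
    set c0 : ℤ → ZMod 2 := fun _ => 0 with hc0
    set δ : ℤ → ZMod 2 := fun j => if j = 0 then 1 else 0 with hδ
    have H1 : nuca θ16 c1 = δ := by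
      funext x
      rcases lt_trichotomy x 0 with h | h | h
      · rw [nuca16_neg _ _ h, hδ]; simp only [hc1, if_neg h.ne]; decide
      · subst h; rw [nuca16_zero]; simp [hc1, hδ]
      · rw [nuca16_pos _ _ h, hδ]; simp only [hc1, if_neg h.ne']; decide
    have H0 : nuca θ16 c0 = c0 := by
      funext x
      rcases lt_trichotomy x 0 with h | h | h
      · rw [nuca16_neg _ _ h]; simp [hc0]
      · subst h; rw [nuca16_zero]
      · rw [nuca16_pos _ _ h]; simp [hc0]
    have hδ1 : nuca φ δ = c1 := by rw [← H1, hL]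
    have hδ0 : nuca φ c0 = c0 := by
      calc nuca φ c0 = nuca φ (nuca θ16 c0) := by rw [H0]
        _ = c0 := hL c0
    set x : ℤ := -(s : ℤ) - 1 with hx
    have hagree : ∀ i : ℤ, -(s : ℤ) ≤ i → i ≤ (s : ℤ) →
        (fun i => δ (x + i)) i = (fun i => c0 (x + i)) i := by
      intro i h1 h2
      simp only [hδ, hc0]
      rw [if_neg (by omega)]
    have := hloc x _ _ hagree
    have e1 : nuca φ δ x = nuca φ c0 x := this
    rw [hδ1, hδ0] at e1
    exact one_ne_zero (hc1 ▸ e1)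
end
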